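/- Let f : G → G be a simplicial map of a graph and K a cycle (simple closed walk) in G containing at most one vertex at which f fails to be locally injective. Then the image walk f(K) contains a cycle whose length is at most the length of K. -/

import Mathlib

open SimpleGraph Walk

namespace ImageCycleAux

variable {V : Type*} {G : SimpleGraph V}

/-- The end of a walk of positive length is in the tail of its support. -/
lemma end_mem_tail_support : ∀ {a b : V} (p : G.Walk a b), 0 < p.length → b ∈ p.support.tail
  | _, _, Walk.nil, h => by simp at h
  | _, _, Walk.cons _ q, _ => by
      simp only [Walk.support_cons, List.tail_cons]
      exact q.end_mem_support

/-- In a nodup list, the last element is not in `dropLast`. -/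
lemma getLast_not_mem_dropLast {α : Type*} {l : List α} (hnd : l.Nodup) (h : l ≠ []) :
    l.getLast h ∉ l.dropLast := by
  intro hmem
  have := List.dropLast_concat_getLast h
  rw [← this, List.nodup_append] at hnd
  exact hnd.2.2 _ hmem _ (by simp) rfl

/-- If a path from `c` to `a` contains the edge `s(a,c)`, then it is that single edge. -/
lemma edges_eq_of_mem_edges : ∀ {c a : V} (q : G.Walk c a), q.IsPath →
    s(a, c) ∈ q.edges → q.edges = [s(c, a)]
  | _, _, Walk.nil, _, he => by simp at he
  | c, a, Walk.cons (v := d) h' q', hq, he => by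
      have hac : G.Adj a c := Walk.adj_of_mem_edges _ he
      rw [Walk.edges_cons, List.mem_cons] at he
      rcases he with he | he
      · have had : a = d := by
          rcases Sym2.eq_iff.mp he with ⟨h1, h2⟩ | ⟨h1, h2⟩
          · exact absurd h1 hac.ne
          · exact h1
        subst had
        have : q' = Walk.nil := Walk.isPath_iff_eq_nil.mp hq.of_cons
        subst this
        simp
      · exfalso
        have hc : c ∈ q'.support :=
          Walk.fst_mem_support_of_mem_edges q' (by rwa [Sym2.eq_swap] at he)
        exact ((Walk.cons_isPath_iff _ _).mp hq).2 hc

/-- A walk whose edges form a chain of distinct consecutive edges and whose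
support repeats a vertex contains a cycle. -/
lemma exists_cycle_of_chain [DecidableEq V] : ∀ {a b : V} (p : G.Walk a b),
    List.Chain' (· ≠ ·) p.edges → ¬ p.support.Nodup →
    ∃ (x : V) (C : G.Walk x x), C.IsCycle ∧ C.length ≤ p.length ∧
      ∀ e ∈ C.edges, e ∈ p.edges
  | _, _, Walk.nil, _, hnd => by simp at hnd
  | a, b, Walk.cons (v := c) h p', hch, hnd => by
      rw [Walk.support_cons, List.nodup_cons, not_and_or] at hnd
      by_cases hnd' : p'.support.Nodup
      · have ha : a ∈ p'.support := by
          rcases hnd with h1 | h2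
          · exact not_not.mp h1
          · exact absurd hnd' h2
        have hqpath : (p'.takeUntil a ha).IsPath := (Walk.IsPath.mk' hnd').takeUntil ha
        have hqedges : p'.edges = (p'.takeUntil a ha).edges ++ (p'.dropUntil a ha).edges := by
          rw [← Walk.edges_append, p'.take_spec ha]
        have hne : s(a, c) ∉ (p'.takeUntil a ha).edges := by
          intro he
          have heq := edges_eq_of_mem_edges _ hqpath he
          rw [Walk.edges_cons, List.Chain', List.isChain_cons] at hch
          have hh := hch.1
          rw [hqedges, heq] at hh
          have := hh s(c, a) rfl
          rw [Sym2.eq_swap] at this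
          exact this rfl
        have hcyc : (Walk.cons h (p'.takeUntil a ha)).IsCycle :=
          (Walk.cons_isCycle_iff _ h).mpr ⟨hqpath, hne⟩
        refine ⟨a, Walk.cons h (p'.takeUntil a ha), hcyc, ?_, ?_⟩
        · simp only [Walk.length_cons]
          exact Nat.succ_le_succ (p'.length_takeUntil_le ha)
        · intro e he
          rw [Walk.edges_cons, List.mem_cons] at he ⊢
          rcases he with he | he
          · exact Or.inl he
          · exact Or.inr (Walk.edges_takeUntil_subset p' ha he)
      · obtain ⟨x, C, hC, hlen, hsub⟩ :=
          exists_cycle_of_chain p' ((List.isChain_cons.mp (by rwa [Walk.edges_cons] at hch)).2) hnd'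
        exact ⟨x, C, hC, hlen.trans (by simp [Nat.le_succ]),
          fun e he => by rw [Walk.edges_cons]; exact List.mem_cons_of_mem _ (hsub e he)⟩

/-- Local injectivity along a walk gives distinctness of consecutive mapped edges. -/
lemma chain_map {f : V → V} (hf : ∀ ⦃u v⦄, G.Adj u v → G.Adj (f u) (f v)) :
    ∀ {x y : V} (p : G.Walk x y), p.support.tail.Nodup →
      x ∉ p.support.tail.dropLast → (x = y → 2 < p.length) →
      (∀ v ∈ p.support.tail.dropLast, Set.InjOn f (insert v (G.neighborSet v))) →
      List.Chain' (· ≠ ·) (p.edges.map (Sym2.map f))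
  | _, _, Walk.nil, _, _, _, _ => by simp [List.Chain']
  | _, _, Walk.cons h Walk.nil, _, _, _, _ => by simp [List.Chain']
  | a, y, Walk.cons (v := b) h₁ (Walk.cons (v := c) h₂ r), hnd, hx, h3, hg => by
      have hsupp : (Walk.cons h₁ (Walk.cons h₂ r)).support.tail = b :: r.support := by
        simp
      rw [hsupp] at hnd hx hg
      have hrne : r.support ≠ [] := r.support_ne_nil
      have hbtail : b ∉ r.support := (List.nodup_cons.mp hnd).1
      have hdl : (b :: r.support).dropLast = b :: r.support.dropLast :=
        List.dropLast_cons_of_ne_nil hrne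
      rw [hdl] at hx hg
      have hIH : List.Chain' (· ≠ ·) ((Walk.cons h₂ r).edges.map (Sym2.map f)) := by
        apply chain_map hf (Walk.cons h₂ r)
        · simpa using (List.nodup_cons.mp hnd).2
        · simp only [Walk.support_cons, List.tail_cons]
          intro hmem
          exact hbtail (List.dropLast_subset _ hmem)
        · intro hby
          exact absurd (hby ▸ r.end_mem_support) hbtail
        · intro v hv
          simp only [Walk.support_cons, List.tail_cons] at hv
          exact hg v (List.mem_cons_of_mem _ hv)
      rw [Walk.edges_cons, List.map_cons, List.Chain', List.isChain_cons]
      refine ⟨?_, hIH⟩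
      intro e he
      have hhead : e = Sym2.map f s(b, c) := by
        rw [Walk.edges_cons, List.map_cons] at he
        simpa using he.symm
      subst hhead
      simp only [Sym2.map_pair_eq]
      intro heq
      have hfab : f a ≠ f b := (hf h₁).ne
      have hfac : f a = f c := by
        rcases Sym2.eq_iff.mp heq with ⟨ha1, _⟩ | ⟨ha1, _⟩
        · exact absurd ha1 hfab
        · exact ha1
      have hac : a ≠ c := by
        intro hac
        subst hac
        rcases Nat.eq_zero_or_pos r.length with hr0 | hrpos
        · -- r has length 0, so y = c = a
          have hay : a = y := Walk.eq_of_length_eq_zero hr0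
          have := h3 hay
          simp only [Walk.length_cons] at this
          omega
        · -- a = c is the head of r.support, which is in dropLast since r.support is long
          apply hx
          refine List.mem_cons_of_mem _ ?_
          have : r.support = a :: r.support.tail := r.support_eq_cons
          rw [this, List.dropLast_cons_of_ne_nil]
          · simp
          · intro htail
            have := congrArg List.length r.support_eq_cons
            rw [Walk.length_support, htail] at this
            simp only [List.length_cons, List.length_nil] at this
            omega
      have hbgood : Set.InjOn f (insert b (G.neighborSet b)) := hg b (by simp)
      exact hac (hbgood (Set.mem_insert_of_mem _ h₁.symm)
        (Set.mem_insert_of_mem _ h₂) hfac)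

/-- Core lemma: basepoint of the cycle is the (possibly) bad vertex. -/
lemma core {f : V → V} (hf : ∀ ⦃u v⦄, G.Adj u v → G.Adj (f u) (f v))
    {x : V} (C : G.Walk x x) (hC : C.IsCycle)
    (hg : ∀ v ∈ C.support, v ≠ x → Set.InjOn f (insert v (G.neighborSet v))) :
    ∃ (u' : V) (D : G.Walk u' u'), D.IsCycle ∧ D.length ≤ C.length ∧
      ∀ e ∈ D.edges, e ∈ C.edges.map (Sym2.map f) := by
  classical
  have hlen3 := hC.three_le_length
  have hnd : C.support.tail.Nodup := hC.2
  have hxlast : x ∈ C.support.tail := end_mem_tail_support C (by omega)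
  have htne : C.support.tail ≠ [] := List.ne_nil_of_mem hxlast
  have hgl : C.support.tail.getLast htne = x := by
    rw [List.getLast_tail]
    exact C.getLast_support
  have hxnotdrop : x ∉ C.support.tail.dropLast := by
    have := getLast_not_mem_dropLast hnd htne
    rwa [hgl] at this
  let F : G →g G := ⟨f, fun h => hf h⟩
  have hWedges : (C.map F).edges = C.edges.map (Sym2.map f) := Walk.edges_map _ _
  have hchain : List.Chain' (· ≠ ·) (C.map F).edges := by
    rw [hWedges]
    apply chain_map hf C hnd hxnotdrop (fun _ => by omega)
    intro v hv
    refine hg v ?_ ?_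
    · have := List.dropLast_subset _ hv
      rw [C.support_eq_cons]
      exact List.mem_cons_of_mem _ this
    · intro hvx; rw [hvx] at hv; exact hxnotdrop hv
  have hWnd : ¬ (C.map F).support.Nodup := by
    have h1 : f x ∈ (C.map F).support.tail :=
      end_mem_tail_support _ (by rw [Walk.length_map]; omega)
    rw [(C.map F).support_eq_cons, List.nodup_cons]
    tauto
  obtain ⟨u', D, hD, hlen, hsub⟩ := exists_cycle_of_chain (C.map F) hchain hWnd
  exact ⟨u', D, hD, by rw [Walk.length_map] at hlen; exact hlen,
    fun e he => hWedges ▸ hsub e he⟩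

end ImageCycleAux

/-- If `K` is a cycle of a graph containing at most one vertex at
which the simplicial map `f` fails to be locally injective, then the image walk
`f(K)` contains a cycle of length at most the length of `K`. -/
theorem image_of_cycle_contains_cycle {V : Type*} (G : SimpleGraph V)
    (f : V → V) (hf : ∀ ⦃u v⦄, G.Adj u v → G.Adj (f u) (f v))
    {u : V} (K : G.Walk u u) (hK : K.IsCycle)
    (hloc : ∃ w : V, ∀ v ∈ K.support, v ≠ w →
      Set.InjOn f (insert v (G.neighborSet v))) :
    ∃ (u' : V) (C : G.Walk u' u'), C.IsCycle ∧ C.length ≤ K.length ∧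
      ∀ e ∈ C.edges, e ∈ K.edges.map (Sym2.map f) := by
  classical
  obtain ⟨w, hw⟩ := hloc
  by_cases hwmem : w ∈ K.support
  · have hCcyc : (K.rotate w hwmem).IsCycle := hK.rotate hwmem
    have hedges : (K.rotate w hwmem).edges ~r K.edges := K.rotate_edges w hwmem
    have hlen : (K.rotate w hwmem).length = K.length := by
      have := hedges.perm.length_eq
      rwa [Walk.length_edges, Walk.length_edges] at this
    have hsupp : ∀ v ∈ (K.rotate w hwmem).support, v ∈ K.support := by
      intro v hv
      rw [(K.rotate w hwmem).support_eq_cons, List.mem_cons] at hv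
      rcases hv with hv | hv
      · rwa [hv]
      · have := (K.support_rotate w hwmem).perm.mem_iff.mp hv
        rw [K.support_eq_cons]
        exact List.mem_cons_of_mem _ this
    obtain ⟨u', D, hD, hlen', hsub⟩ := ImageCycleAux.core hf (K.rotate w hwmem) hCcyc
      (fun v hv hvw => hw v (hsupp v hv) hvw)
    refine ⟨u', D, hD, hlen ▸ hlen', fun e he => ?_⟩
    have := hsub e he
    rw [List.mem_map] at this ⊢
    obtain ⟨e', he', rfl⟩ := this
    exact ⟨e', hedges.perm.mem_iff.mp he', rfl⟩
  · exact ImageCycleAux.core hf K hK (fun v hv _ => hw v hv (fun h => hwmem (h ▸ hv)))
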